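/- Let G₁ be a pseudo strongly regular graph with parameters (n₁, k₁, μ₁) and G₂ a pseudo strongly regular graph with parameters (n₂, k₂, μ₂), where neither G₁ nor G₂ is complete (each contains a pair of distinct non-adjacent vertices). Then the join G₁ ∨ G₂ is pseudo strongly regular with parameters (n₁+n₂, k, μ) for some k and μ if and only if k₁ + n₂ = k₂ + n₁ and μ₁ + n₂ = μ₂ + n₁, in which case k = k₁ + n₂ and μ = μ₁ + n₂. -/

import Mathlib

open SimpleGraph

def SimpleGraph.IsPseudoSRG {V : Type*} [Fintype V] (G : SimpleGraph V) (n k m : ℕ) : Prop :=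
  Fintype.card V = n ∧ (∀ v : V, (G.neighborSet v).ncard = k) ∧
    ∀ u v : V, u ≠ v → ¬G.Adj u v → (G.commonNeighbors u v).ncard = m

/-- The join of two simple graphs on disjoint vertex sets. -/
def SimpleGraph.joinGraph {V₁ V₂ : Type*} (G₁ : SimpleGraph V₁) (G₂ : SimpleGraph V₂) :
    SimpleGraph (V₁ ⊕ V₂) where
  Adj x y := match x, y with
    | Sum.inl a, Sum.inl b => G₁.Adj a b
    | Sum.inr a, Sum.inr b => G₂.Adj a b
    | Sum.inl _, Sum.inr _ => True
    | Sum.inr _, Sum.inl _ => True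
  symm := by constructor; rintro (a | a) (b | b) h <;> first | exact h.symm | trivial
  loopless := by constructor; rintro (a | a) h <;> simp_all [SimpleGraph.irrefl]

set_option linter.unusedSectionVars false

section aux
variable {V₁ V₂ : Type*} [Fintype V₁] [Fintype V₂]
  (G₁ : SimpleGraph V₁) (G₂ : SimpleGraph V₂)

lemma union_ncard (s : Set V₁) (t : Set V₂) :
    ((Sum.inl '' s ∪ Sum.inr '' t : Set (V₁ ⊕ V₂))).ncard = s.ncard + t.ncard := by
  rw [Set.ncard_union_eq, Set.ncard_image_of_injective _ Sum.inl_injective,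
    Set.ncard_image_of_injective _ Sum.inr_injective]
  exact Set.disjoint_left.mpr (by rintro x ⟨a, _, rfl⟩ ⟨b, _, h⟩; exact Sum.inl_ne_inr h.symm)

lemma nb_inl (a : V₁) : (G₁.joinGraph G₂).neighborSet (Sum.inl a) =
    Sum.inl '' G₁.neighborSet a ∪ Sum.inr '' Set.univ := by
  ext (x | x) <;> simp [SimpleGraph.joinGraph, neighborSet]

lemma nb_inr (a : V₂) : (G₁.joinGraph G₂).neighborSet (Sum.inr a) =
    Sum.inl '' Set.univ ∪ Sum.inr '' G₂.neighborSet a := by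
  ext (x | x) <;> simp [SimpleGraph.joinGraph, neighborSet]

lemma cn_inl (a b : V₁) : (G₁.joinGraph G₂).commonNeighbors (Sum.inl a) (Sum.inl b) =
    Sum.inl '' G₁.commonNeighbors a b ∪ Sum.inr '' Set.univ := by
  ext (x | x) <;> simp [SimpleGraph.joinGraph, commonNeighbors, neighborSet, Set.mem_inter_iff]

lemma cn_inr (a b : V₂) : (G₁.joinGraph G₂).commonNeighbors (Sum.inr a) (Sum.inr b) =
    Sum.inl '' Set.univ ∪ Sum.inr '' G₂.commonNeighbors a b := by
  ext (x | x) <;> simp [SimpleGraph.joinGraph, commonNeighbors, neighborSet, Set.mem_inter_iff]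

end aux

/-- the join of two non-complete pseudo strongly regular graphs is pseudo strongly
regular with parameters `(n₁ + n₂, k, μ)` for some `k, μ` iff `k₁ + n₂ = k₂ + n₁` and
`μ₁ + n₂ = μ₂ + n₁`, in which case `k = k₁ + n₂` and `μ = μ₁ + n₂`. -/
theorem stmt_8 {V₁ V₂ : Type*} [Fintype V₁] [Fintype V₂]
    (G₁ : SimpleGraph V₁) (G₂ : SimpleGraph V₂) (n₁ k₁ m₁ n₂ k₂ m₂ : ℕ)
    (h₁ : G₁.IsPseudoSRG n₁ k₁ m₁) (h₂ : G₂.IsPseudoSRG n₂ k₂ m₂)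
    (hnc₁ : ∃ a b : V₁, a ≠ b ∧ ¬G₁.Adj a b) (hnc₂ : ∃ a b : V₂, a ≠ b ∧ ¬G₂.Adj a b) :
    ((∃ k m : ℕ, (G₁.joinGraph G₂).IsPseudoSRG (n₁ + n₂) k m) ↔
        (k₁ + n₂ = k₂ + n₁ ∧ m₁ + n₂ = m₂ + n₁)) ∧
      ((k₁ + n₂ = k₂ + n₁ ∧ m₁ + n₂ = m₂ + n₁) →
        (G₁.joinGraph G₂).IsPseudoSRG (n₁ + n₂) (k₁ + n₂) (m₁ + n₂)) := by
  obtain ⟨hc₁, hk₁, hm₁⟩ := h₁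
  obtain ⟨hc₂, hk₂, hm₂⟩ := h₂
  have hu₁ : (Set.univ : Set V₁).ncard = n₁ := by
    rw [Set.ncard_univ, Nat.card_eq_fintype_card, hc₁]
  have hu₂ : (Set.univ : Set V₂).ncard = n₂ := by
    rw [Set.ncard_univ, Nat.card_eq_fintype_card, hc₂]
  have hnbl : ∀ a : V₁, ((G₁.joinGraph G₂).neighborSet (Sum.inl a)).ncard = k₁ + n₂ := by
    intro a; rw [nb_inl, union_ncard, hk₁, hu₂]
  have hnbr : ∀ a : V₂, ((G₁.joinGraph G₂).neighborSet (Sum.inr a)).ncard = k₂ + n₁ := by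
    intro a; rw [nb_inr, union_ncard, hk₂, hu₁]; omega
  have hcnl : ∀ a b : V₁, a ≠ b → ¬G₁.Adj a b →
      ((G₁.joinGraph G₂).commonNeighbors (Sum.inl a) (Sum.inl b)).ncard = m₁ + n₂ := by
    intro a b hab hn; rw [cn_inl, union_ncard, hm₁ a b hab hn, hu₂]
  have hcnr : ∀ a b : V₂, a ≠ b → ¬G₂.Adj a b →
      ((G₁.joinGraph G₂).commonNeighbors (Sum.inr a) (Sum.inr b)).ncard = m₂ + n₁ := by
    intro a b hab hn; rw [cn_inr, union_ncard, hm₂ a b hab hn, hu₁]; omega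
  obtain ⟨a₁, b₁, hab₁, hn₁⟩ := hnc₁
  obtain ⟨a₂, b₂, hab₂, hn₂⟩ := hnc₂
  have key : (k₁ + n₂ = k₂ + n₁ ∧ m₁ + n₂ = m₂ + n₁) →
      (G₁.joinGraph G₂).IsPseudoSRG (n₁ + n₂) (k₁ + n₂) (m₁ + n₂) := by
    rintro ⟨hk, hm⟩
    refine ⟨by simp [hc₁, hc₂], ?_, ?_⟩
    · rintro (v | v)
      · exact hnbl v
      · rw [hnbr v, hk]
    · rintro (u | u) (v | v) huv hadj
      · exact hcnl u v (by simpa using huv) hadj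
      · exact absurd trivial hadj
      · exact absurd trivial hadj
      · rw [hcnr u v (by simpa using huv) hadj, hm]
  refine ⟨⟨?_, fun h => ⟨_, _, key h⟩⟩, key⟩
  rintro ⟨k, m, _, hk, hm⟩
  have e1 := hk (Sum.inl a₁); rw [hnbl] at e1
  have e2 := hk (Sum.inr a₂); rw [hnbr] at e2
  have f1 := hm (Sum.inl a₁) (Sum.inl b₁) (by simp [hab₁]) (by exact hn₁)
  rw [hcnl a₁ b₁ hab₁ hn₁] at f1
  have f2 := hm (Sum.inr a₂) (Sum.inr b₂) (by simp [hab₂]) (by exact hn₂)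
  rw [hcnr a₂ b₂ hab₂ hn₂] at f2
  omega
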